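/- Fix d ≥ 2 and p ∈ (0,1). Let V, U₀,₁,…,U₀,_d, U₁,₁,…,U₁,_d be mutually independent standard uniform random variables on [0,1], set I = 1{V > 1-p} and U_m = U₀,ₘ^{1-p}·U₁,ₘ^{I} for m = 1,…,d (so the underlying Bernoulli vector is comonotonic with all margins p). Then Spearman's rho derived from average upper orthant dependence equals ρ^{cU} = ((d+1)/(2^d - d - 1))·( (2/(2-p))^d·( 1 - p + p/2^d ) - 1 ), where ρ^{cU} = ((d+1)/(2^d-d-1))·( 2^d·E[ Π_{m=1}^d U_m ] - 1 ). -/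

import Mathlib

open MeasureTheory ProbabilityTheory Set

private lemma aux_indep_prod_integrable {Ω ι : Type*} [MeasurableSpace Ω] {μ : Measure Ω}
    [IsProbabilityMeasure μ] {f : ι → Ω → ℝ}
    (hindep : iIndepFun f μ)
    (hmeas : ∀ i, Measurable (f i)) (hint : ∀ i, Integrable (f i) μ) (s : Finset ι) :
    Integrable (fun ω => ∏ i ∈ s, f i ω) μ := by
  classical
  induction s using Finset.induction_on with
  | empty => simpa using (integrable_const (1 : ℝ))
  | @insert a s ha ih =>
    have h : IndepFun (f a) (∏ j ∈ s, f j) μ :=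
      (hindep.indepFun_finsetProd_of_notMem hmeas ha).symm
    have h2 : Integrable (f a * ∏ j ∈ s, f j) μ := by
      refine h.integrable_mul (hint a) ?_
      have : (∏ j ∈ s, f j) = fun ω => ∏ j ∈ s, f j ω := by
        funext ω; simp [Finset.prod_apply]
      rw [this]; exact ih
    have : (fun ω => ∏ i ∈ insert a s, f i ω) = f a * ∏ j ∈ s, f j := by
      funext ω; simp [Finset.prod_insert ha, Finset.prod_apply]
    rw [this]; exact h2

private lemma aux_indep_prod_integral {Ω ι : Type*} [MeasurableSpace Ω] {μ : Measure Ω}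
    [IsProbabilityMeasure μ] {f : ι → Ω → ℝ}
    (hindep : iIndepFun f μ)
    (hmeas : ∀ i, Measurable (f i)) (s : Finset ι) :
    ∫ ω, ∏ i ∈ s, f i ω ∂μ = ∏ i ∈ s, ∫ ω, f i ω ∂μ := by
  classical
  induction s using Finset.induction_on with
  | empty => simp
  | @insert a s ha ih =>
    have h : IndepFun (f a) (∏ j ∈ s, f j) μ :=
      (hindep.indepFun_finsetProd_of_notMem hmeas ha).symm
    have hmp : Measurable (∏ j ∈ s, f j) := by
      have : (∏ j ∈ s, f j) = fun ω => ∏ j ∈ s, f j ω := by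
        funext ω; simp [Finset.prod_apply]
      rw [this]; exact Finset.measurable_prod s fun j _ => hmeas j
    have key := h.integral_mul_eq_mul_integral (hmeas a).aestronglyMeasurable hmp.aestronglyMeasurable
    have h1 : (fun ω => ∏ i ∈ insert a s, f i ω) = f a * ∏ j ∈ s, f j := by
      funext ω; simp [Finset.prod_insert ha, Finset.prod_apply]
    rw [Finset.prod_insert ha, ← ih]
    rw [show (∫ ω, ∏ i ∈ insert a s, f i ω ∂μ) = ∫ ω, (f a * ∏ j ∈ s, f j) ω ∂μ by rw [h1]]
    rw [show (∫ ω, ∏ j ∈ s, f j ω ∂μ) = ∫ ω, (∏ j ∈ s, f j) ω ∂μ by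
      congr 1; funext ω; simp [Finset.prod_apply]]
    exact key

private lemma aux_int_ind_gt {p : ℝ} (hp : p ∈ Ioo (0 : ℝ) 1) :
    ∫ x in Icc (0 : ℝ) 1, (if 1 - p < x then (1 : ℝ) else 0) = p := by
  have h1 : (fun x : ℝ => if 1 - p < x then (1 : ℝ) else 0)
      = (Ioi (1 - p)).indicator (fun _ => (1 : ℝ)) := by
    funext x; simp [indicator_apply, mem_Ioi]
  rw [h1, integral_indicator measurableSet_Ioi, Measure.restrict_restrict measurableSet_Ioi]
  have h2 : Ioi (1 - p) ∩ Icc (0 : ℝ) 1 = Ioc (1 - p) 1 := by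
    ext x
    simp only [mem_inter_iff, mem_Ioi, mem_Icc, mem_Ioc]
    constructor
    · rintro ⟨h, _, h'⟩; exact ⟨h, h'⟩
    · rintro ⟨h, h'⟩; exact ⟨h, by nlinarith [hp.2], h'⟩
  rw [h2]
  simp [Real.volume_Ioc, ENNReal.toReal_ofReal hp.1.le, hp.1.le]

private lemma aux_int_ind_le {p : ℝ} (hp : p ∈ Ioo (0 : ℝ) 1) :
    ∫ x in Icc (0 : ℝ) 1, (if 1 - p < x then (0 : ℝ) else 1) = 1 - p := by
  have h1 : (fun x : ℝ => if 1 - p < x then (0 : ℝ) else 1)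
      = (Iic (1 - p)).indicator (fun _ => (1 : ℝ)) := by
    funext x
    by_cases h : 1 - p < x
    · simp [indicator_apply, mem_Iic, h, not_le.mpr h]
    · simp [indicator_apply, mem_Iic, h, le_of_not_gt h]
  rw [h1, integral_indicator measurableSet_Iic, Measure.restrict_restrict measurableSet_Iic]
  have h2 : Iic (1 - p) ∩ Icc (0 : ℝ) 1 = Icc 0 (1 - p) := by
    ext x
    simp only [mem_inter_iff, mem_Iic, mem_Icc]
    constructor
    · rintro ⟨h, h', _⟩; exact ⟨h', h⟩
    · rintro ⟨h, h'⟩; exact ⟨h', h, by nlinarith [hp.1]⟩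
  rw [h2]
  simp [Real.volume_Icc, ENNReal.toReal_ofReal (by nlinarith [hp.2] : (0:ℝ) ≤ 1 - p), hp.2.le]

private lemma aux_int_rpow {p : ℝ} (hp : p ∈ Ioo (0 : ℝ) 1) :
    ∫ x in Icc (0 : ℝ) 1, x ^ (1 - p) = 1 / (2 - p) := by
  rw [MeasureTheory.integral_Icc_eq_integral_Ioc,
    ← intervalIntegral.integral_of_le (by norm_num : (0:ℝ) ≤ 1)]
  rw [integral_rpow (Or.inl (by nlinarith [hp.2] : (-1 : ℝ) < 1 - p))]
  have h2 : (1 : ℝ) - p + 1 = 2 - p := by ring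
  rw [h2, Real.one_rpow, Real.zero_rpow (by nlinarith [hp.2] : (2:ℝ) - p ≠ 0)]
  ring

private lemma aux_int_id : ∫ x in Icc (0 : ℝ) 1, x = 1 / 2 := by
  rw [MeasureTheory.integral_Icc_eq_integral_Ioc,
    ← intervalIntegral.integral_of_le (by norm_num : (0:ℝ) ≤ 1)]
  simp [integral_id]

/-- Fix `d ≥ 2`, `p ∈ (0,1)`.  Let `V, U₀,₁,…,U₀,d, U₁,₁,…,U₁,d` be mutually independent
standard uniforms, `I = 1{V > 1-p}` and `U_m = U₀ₘ^(1-p) * U₁ₘ^I` (the comonotonic /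
extreme positive dependence GFGM construction with all margins `p`).  Then Spearman's rho
from average upper orthant dependence equals
`ρ^{cU} = ((d+1)/(2^d-d-1)) ((2/(2-p))^d (1 - p + p/2^d) - 1)`, where
`ρ^{cU} = ((d+1)/(2^d-d-1)) (2^d E[Π_m U_m] - 1)`. -/
theorem gfgm_epd_rho_cU
    {Ω : Type*} [MeasurableSpace Ω] (P : Measure Ω) [IsProbabilityMeasure P]
    (d : ℕ) (hd : 2 ≤ d) (p : ℝ) (hp : p ∈ Ioo (0 : ℝ) 1)
    (V : Ω → ℝ) (U₀ U₁ : Fin d → Ω → ℝ)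
    (hV : Measurable V) (hU₀ : ∀ m, Measurable (U₀ m)) (hU₁ : ∀ m, Measurable (U₁ m))
    (hVlaw : P.map V = volume.restrict (Icc (0 : ℝ) 1))
    (hU₀law : ∀ m, P.map (U₀ m) = volume.restrict (Icc (0 : ℝ) 1))
    (hU₁law : ∀ m, P.map (U₁ m) = volume.restrict (Icc (0 : ℝ) 1))
    (hiid : iIndepFun
      (Sum.elim (fun _ : Unit => V) (Sum.elim U₀ U₁)) P) :
    ((d : ℝ) + 1) / (2 ^ d - d - 1) *
        ((2 : ℝ) ^ d * (∫ ω, ∏ m,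
          (U₀ m ω ^ (1 - p) * U₁ m ω ^ (if 1 - p < V ω then (1 : ℝ) else 0)) ∂P) - 1)
      = ((d : ℝ) + 1) / (2 ^ d - d - 1) *
          ((2 / (2 - p)) ^ d * (1 - p + p / 2 ^ d) - 1) := by
  classical
  set F : Unit ⊕ Fin d ⊕ Fin d → Ω → ℝ := Sum.elim (fun _ : Unit => V) (Sum.elim U₀ U₁) with hF
  have hFmeas : ∀ i, Measurable (F i) := by
    rintro (_ | m | m)
    exacts [hV, hU₀ _, hU₁ _]
  -- the two composed families
  set φ₁ : Unit ⊕ Fin d ⊕ Fin d → ℝ → ℝ :=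
    Sum.elim (fun _ => fun x => if 1 - p < x then (0 : ℝ) else 1)
      (Sum.elim (fun _ => fun x => x ^ (1 - p)) (fun _ => fun _ => (1 : ℝ))) with hφ₁
  set φ₂ : Unit ⊕ Fin d ⊕ Fin d → ℝ → ℝ :=
    Sum.elim (fun _ => fun x => if 1 - p < x then (1 : ℝ) else 0)
      (Sum.elim (fun _ => fun x => x ^ (1 - p)) (fun _ => fun x => x)) with hφ₂
  have hrpow_meas : Measurable (fun x : ℝ => x ^ (1 - p)) :=
    (Real.continuous_rpow_const (by nlinarith [hp.2] : (0:ℝ) ≤ 1 - p)).measurable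
  have hφ₁meas : ∀ i, Measurable (φ₁ i) := by
    rintro (_ | m | m)
    · exact Measurable.ite (measurableSet_lt measurable_const measurable_id)
        measurable_const measurable_const
    · exact hrpow_meas
    · exact measurable_const
  have hφ₂meas : ∀ i, Measurable (φ₂ i) := by
    rintro (_ | m | m)
    · exact Measurable.ite (measurableSet_lt measurable_const measurable_id)
        measurable_const measurable_const
    · exact hrpow_meas
    · exact measurable_id
  have hindep₁ : iIndepFun
      (fun i => φ₁ i ∘ F i) P := hiid.comp φ₁ hφ₁meas
  have hindep₂ : iIndepFun
      (fun i => φ₂ i ∘ F i) P := hiid.comp φ₂ hφ₂meas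
  have hFlaw : ∀ i, P.map (F i) = volume.restrict (Icc (0 : ℝ) 1) := by
    rintro (_ | m | m)
    exacts [hVlaw, hU₀law _, hU₁law _]
  -- marginal integrals
  have hmarg : ∀ (i : Unit ⊕ Fin d ⊕ Fin d) (φ : ℝ → ℝ), Measurable φ →
      ∫ ω, φ (F i ω) ∂P = ∫ x in Icc (0 : ℝ) 1, φ x := by
    intro i φ hφ
    rw [← hFlaw i, integral_map (hFmeas i).aemeasurable hφ.aestronglyMeasurable]
  -- integrability of marginals
  have hIOn : ∀ φ : ℝ → ℝ, Measurable φ → (∀ x, |φ x| ≤ 1) →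
      ∀ i, Integrable (fun ω => φ (F i ω)) P := by
    intro φ hφ hb i
    have : Integrable φ (volume.restrict (Icc (0 : ℝ) 1)) := by
      refine Integrable.mono' (integrable_const (1 : ℝ)) hφ.aestronglyMeasurable ?_
      filter_upwards with x using by simpa [Real.norm_eq_abs] using hb x
    rw [← hFlaw i] at this
    exact (integrable_map_measure hφ.aestronglyMeasurable (hFmeas i).aemeasurable).mp this
  have hrpow_bdd : ∀ i, Integrable (fun ω => F i ω ^ (1 - p)) P := by
    intro i
    have hInt : Integrable (fun x : ℝ => x ^ (1 - p)) (volume.restrict (Icc (0 : ℝ) 1)) :=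
      ((Real.continuous_rpow_const
        (by nlinarith [hp.2] : (0:ℝ) ≤ 1 - p)).integrableOn_Icc).mono_measure le_rfl
    rw [← hFlaw i] at hInt
    exact (integrable_map_measure hrpow_meas.aestronglyMeasurable
      (hFmeas i).aemeasurable).mp hInt
  have hid_int : ∀ i, Integrable (fun ω => F i ω) P := by
    intro i
    have hInt : Integrable (fun x : ℝ => x) (volume.restrict (Icc (0 : ℝ) 1)) :=
      continuous_id.integrableOn_Icc
    rw [← hFlaw i] at hInt
    exact (integrable_map_measure measurable_id.aestronglyMeasurable
      (hFmeas i).aemeasurable).mp hInt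
  have hφ₁int : ∀ i, Integrable (fun ω => φ₁ i (F i ω)) P := by
    rintro (_ | m | m)
    · exact hIOn _ (hφ₁meas (Sum.inl ())) (fun x => by dsimp [φ₁]; split <;> simp) _
    · exact hrpow_bdd _
    · simpa [φ₁] using (integrable_const (1 : ℝ))
  have hφ₂int : ∀ i, Integrable (fun ω => φ₂ i (F i ω)) P := by
    rintro (_ | m | m)
    · exact hIOn _ (hφ₂meas (Sum.inl ())) (fun x => by dsimp [φ₂]; split <;> simp) _
    · exact hrpow_bdd _
    · exact hid_int (Sum.inr (Sum.inr m))
  -- rewrite the integrand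
  have hpt : ∀ ω, (∏ m, (U₀ m ω ^ (1 - p) * U₁ m ω ^ (if 1 - p < V ω then (1 : ℝ) else 0)))
      = (∏ i, φ₁ i (F i ω)) + (∏ i, φ₂ i (F i ω)) := by
    intro ω
    by_cases h : 1 - p < V ω
    · simp [φ₁, φ₂, F, Fintype.prod_sum_type, h, Finset.prod_mul_distrib, Real.rpow_one]
    · simp [φ₁, φ₂, F, Fintype.prod_sum_type, h, Finset.prod_mul_distrib, Real.rpow_zero]
  have hsplit : (∫ ω, ∏ m,
        (U₀ m ω ^ (1 - p) * U₁ m ω ^ (if 1 - p < V ω then (1 : ℝ) else 0)) ∂P)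
      = (∫ ω, ∏ i, φ₁ i (F i ω) ∂P) + ∫ ω, ∏ i, φ₂ i (F i ω) ∂P := by
    rw [show (∫ ω, ∏ m,
        (U₀ m ω ^ (1 - p) * U₁ m ω ^ (if 1 - p < V ω then (1 : ℝ) else 0)) ∂P)
        = ∫ ω, ((∏ i, φ₁ i (F i ω)) + ∏ i, φ₂ i (F i ω)) ∂P from
      integral_congr_ae (Filter.Eventually.of_forall hpt)]
    exact integral_add
      (aux_indep_prod_integrable hindep₁ (fun i => (hφ₁meas i).comp (hFmeas i)) hφ₁int _)
      (aux_indep_prod_integrable hindep₂ (fun i => (hφ₂meas i).comp (hFmeas i)) hφ₂int _)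
  have h2p : (2 : ℝ) - p ≠ 0 := by nlinarith [hp.2]
  have hI1 : (∫ ω, ∏ i, φ₁ i (F i ω) ∂P) = (1 - p) * (1 / (2 - p)) ^ d := by
    have key := aux_indep_prod_integral hindep₁ (fun i => (hφ₁meas i).comp (hFmeas i)) Finset.univ
    simp only [Function.comp_apply, Function.comp] at key
    rw [key, Fintype.prod_sum_type, Fintype.prod_sum_type]
    have e1 : ∀ u : Unit, (∫ ω, φ₁ (Sum.inl u) (F (Sum.inl u) ω) ∂P) = 1 - p := by
      intro u
      rw [hmarg _ _ (hφ₁meas (Sum.inl u))]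
      exact aux_int_ind_le hp
    have e2 : ∀ m : Fin d, (∫ ω, φ₁ (Sum.inr (Sum.inl m)) (F (Sum.inr (Sum.inl m)) ω) ∂P)
        = 1 / (2 - p) := by
      intro m
      rw [hmarg _ _ (hφ₁meas (Sum.inr (Sum.inl m)))]
      exact aux_int_rpow hp
    have e3 : ∀ m : Fin d, (∫ ω, φ₁ (Sum.inr (Sum.inr m)) (F (Sum.inr (Sum.inr m)) ω) ∂P)
        = 1 := by
      intro m; simp [φ₁]
    simp only [e1, e2, e3]
    simp
  have hI2 : (∫ ω, ∏ i, φ₂ i (F i ω) ∂P) = p * (1 / (2 - p)) ^ d * (1 / 2) ^ d := by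
    have key := aux_indep_prod_integral hindep₂ (fun i => (hφ₂meas i).comp (hFmeas i)) Finset.univ
    simp only [Function.comp_apply, Function.comp] at key
    rw [key, Fintype.prod_sum_type, Fintype.prod_sum_type]
    have e1 : ∀ u : Unit, (∫ ω, φ₂ (Sum.inl u) (F (Sum.inl u) ω) ∂P) = p := by
      intro u
      rw [hmarg _ _ (hφ₂meas (Sum.inl u))]
      exact aux_int_ind_gt hp
    have e2 : ∀ m : Fin d, (∫ ω, φ₂ (Sum.inr (Sum.inl m)) (F (Sum.inr (Sum.inl m)) ω) ∂P)
        = 1 / (2 - p) := by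
      intro m
      rw [hmarg _ _ (hφ₂meas (Sum.inr (Sum.inl m)))]
      exact aux_int_rpow hp
    have e3 : ∀ m : Fin d, (∫ ω, φ₂ (Sum.inr (Sum.inr m)) (F (Sum.inr (Sum.inr m)) ω) ∂P)
        = 1 / 2 := by
      intro m
      rw [hmarg _ _ (hφ₂meas (Sum.inr (Sum.inr m)))]
      exact aux_int_id
    simp only [e1, e2, e3]
    simp [mul_assoc]
  rw [hsplit, hI1, hI2]
  congr 1
  have : ((2 : ℝ) / (2 - p)) ^ d = 2 ^ d * (1 / (2 - p)) ^ d := by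
    rw [← mul_pow]; ring_nf
  rw [this]
  have h2 : ((1 : ℝ) / 2) ^ d = 1 / 2 ^ d := by
    rw [div_pow]; norm_num
  rw [h2]
  ring
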